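/- Let G be the complete graph on n ≥ 2 vertices, T > 0, and let ρ: ℝ → ℝ^n be a C¹, T-periodic curve lying in the interior of the probability simplex, i.e. ρ_i(t) > 0 for all i and t and Σ_{i=1}^n ρ_i(t) = 1. Then there exists a continuous family Q(t) of transition rate matrices (off-diagonal entries nonnegative, each row summing to zero) such that ρ̇(t) = ρ(t) Q(t) for all t; in other words, every smooth periodic interior density trajectory on a fully connected graph is realized as the marginal law of a time-inhomogeneous Markov process. -/

import Mathlib

open Matrix

/-- Every C¹, `T`-periodic density trajectory lying in the interior of the
probability simplex over a fully connected graph on `n ≥ 2` vertices is realized as the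
marginal law of a time-inhomogeneous Markov process: there is a continuous family `Q(t)`
of transition rate matrices with `ρ̇(t) = ρ(t) Q(t)`. -/
theorem periodic_density_realized_by_markov {n : ℕ} (hn : 2 ≤ n)
    (T : ℝ) (hT : 0 < T)
    (ρ : ℝ → Fin n → ℝ)
    (hC1 : ∀ i, ContDiff ℝ 1 fun t => ρ t i)
    (hper : ∀ t, ρ (t + T) = ρ t)
    (hpos : ∀ t i, 0 < ρ t i)
    (hsum : ∀ t, ∑ i, ρ t i = 1) :
    ∃ Q : ℝ → Matrix (Fin n) (Fin n) ℝ,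
      (∀ i j, Continuous fun t => Q t i j) ∧
      (∀ t i j, i ≠ j → 0 ≤ Q t i j) ∧
      (∀ t i, ∑ j, Q t i j = 0) ∧
      (∀ t i, HasDerivAt (fun τ => ρ τ i) ((ρ t ᵥ* Q t) i) t) := by
  set d : ℝ → Fin n → ℝ := fun t j => deriv (fun τ => ρ τ j) t with hd
  have hderiv : ∀ t j, HasDerivAt (fun τ => ρ τ j) (d t j) t := by
    intro t j
    exact (((hC1 j).differentiable one_ne_zero) t).hasDerivAt
  have hcontρ : ∀ j, Continuous fun t => ρ t j := fun j => (hC1 j).continuous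
  have hcontd : ∀ j, Continuous fun t => d t j := fun j =>
    (hC1 j).continuous_deriv le_rfl
  have hdsum : ∀ t, ∑ j, d t j = 0 := by
    intro t
    have h1 : HasDerivAt (fun τ => ∑ j, ρ τ j) (∑ j, d t j) t :=
      HasDerivAt.fun_sum fun j _ => hderiv t j
    have h2 : HasDerivAt (fun τ : ℝ => (1 : ℝ)) (0 : ℝ) t := hasDerivAt_const t 1
    have h3 : (fun τ => ∑ j, ρ τ j) = fun _ : ℝ => (1 : ℝ) := funext fun τ => hsum τ
    rw [h3] at h1
    exact h1.unique h2
  set c : ℝ → ℝ := fun t => 1 + ∑ j, |d t j| / ρ t j with hc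
  have hcge : ∀ t j, |d t j| ≤ c t * ρ t j := by
    intro t j
    have hpj := hpos t j
    have h1 : |d t j| / ρ t j ≤ ∑ k, |d t k| / ρ t k := by
      apply Finset.single_le_sum (f := fun k => |d t k| / ρ t k)
      · intro k _; exact div_nonneg (abs_nonneg _) (hpos t k).le
      · exact Finset.mem_univ j
    have h2 : |d t j| / ρ t j ≤ c t := le_trans h1 (by simp only [hc]; linarith)
    calc |d t j| = |d t j| / ρ t j * ρ t j := by field_simp
    _ ≤ c t * ρ t j := by
        exact mul_le_mul_of_nonneg_right h2 hpj.le
  have hcontc : Continuous c := by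
    apply Continuous.add continuous_const
    apply continuous_finset_sum
    intro j _
    exact ((hcontd j).abs).div (hcontρ j) (fun t => (hpos t j).ne')
  refine ⟨fun t => Matrix.of fun i j => c t * ρ t j + d t j - (if i = j then c t else 0),
    ?_, ?_, ?_, ?_⟩
  · intro i j
    apply Continuous.sub
    · exact (hcontc.mul (hcontρ j)).add (hcontd j)
    · by_cases h : i = j <;> simp [h] <;> first | exact hcontc | exact continuous_const
  · intro t i j hij
    simp only [Matrix.of_apply, if_neg hij]
    have := hcge t j
    have := abs_le.mp (le_refl |d t j|) |>.1
    have : -(d t j) ≤ |d t j| := neg_le_abs _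
    linarith [hcge t j]
  · intro t i
    simp only [Matrix.of_apply]
    rw [Finset.sum_sub_distrib, Finset.sum_add_distrib, ← Finset.mul_sum, hsum, hdsum]
    simp
  · intro t i
    have heq : (ρ t ᵥ* Matrix.of fun i j => c t * ρ t j + d t j - (if i = j then c t else 0)) i
        = d t i := by
      simp only [Matrix.vecMul, dotProduct, Matrix.of_apply]
      have : ∀ k : Fin n, ρ t k * (c t * ρ t i + d t i - (if k = i then c t else 0))
          = ρ t k * (c t * ρ t i + d t i) - (if k = i then ρ t k * c t else 0) := by
        intro k; by_cases h : k = i <;> simp [h] <;> ring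
      rw [Finset.sum_congr rfl fun k _ => this k, Finset.sum_sub_distrib,
        ← Finset.sum_mul, hsum]
      simp [mul_comm]
    rw [heq]
    exact hderiv t i
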